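/- For every integer k ≥ 0, the sum, over all finite collections T of nonempty integer intervals [i, j] with 1 ≤ i ≤ j ≤ k that are pairwise disjoint as subsets of ℤ, of (−1)^{|T|} x^{2|T|} equals (−1)^k U_{2k}(x/2), as polynomials with integer coefficients. (This is the signed weight-generating function of trivial heaps of segments on [1,k].) -/
import Mathlib


/-- `U2I m` is the polynomial (with integer coefficients) `U_m(x/2)`, where `U_m`
is the `m`-th Chebyshev polynomial of the second kind: `U2I 0 = 1`, `U2I 1 = x`,
`U2I (m+2) = x · U2I (m+1) − U2I m`. -/
noncomputable def U2I : ℕ → Polynomial ℤ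
  | 0 => 1
  | 1 => Polynomial.X
  | n + 2 => Polynomial.X * U2I (n + 1) - U2I n

lemma U2I_add_two (n : ℕ) : U2I (n + 2) = Polynomial.X * U2I (n + 1) - U2I n := by
  rw [U2I]

/-- Trivial heaps of segments on `[1,k]`. -/
noncomputable def Heaps (k : ℕ) : Finset (Finset (ℕ × ℕ)) :=
  ((Finset.Icc 1 k ×ˢ Finset.Icc 1 k).powerset).filter
    (fun T : Finset (ℕ × ℕ) =>
      (∀ p ∈ T, p.1 ≤ p.2) ∧
      (∀ p ∈ T, ∀ q ∈ T, p ≠ q →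
        Disjoint (Finset.Icc p.1 p.2) (Finset.Icc q.1 q.2)))

noncomputable def F (k : ℕ) : Polynomial ℤ :=
  ∑ T ∈ Heaps k, (-1 : Polynomial ℤ) ^ T.card * Polynomial.X ^ (2 * T.card)

noncomputable def G (k : ℕ) : Polynomial ℤ := (-1) ^ k * U2I (2 * k)

lemma mem_Heaps {k : ℕ} {T : Finset (ℕ × ℕ)} :
    T ∈ Heaps k ↔ T ⊆ Finset.Icc 1 k ×ˢ Finset.Icc 1 k ∧
      (∀ p ∈ T, p.1 ≤ p.2) ∧
      (∀ p ∈ T, ∀ q ∈ T, p ≠ q →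
        Disjoint (Finset.Icc p.1 p.2) (Finset.Icc q.1 q.2)) := by
  simp [Heaps, and_assoc]

/-- the first coordinate of the (unique) segment of `T` ending at `n`, or 0. -/
noncomputable def phi (n : ℕ) (T : Finset (ℕ × ℕ)) : ℕ :=
  ∑ p ∈ T.filter (fun p => p.2 = n), p.1

lemma filter_eq_singleton {n i : ℕ} {T : Finset (ℕ × ℕ)} (hT : T ∈ Heaps n)
    (hi : (i, n) ∈ T) : T.filter (fun p => p.2 = n) = {(i, n)} := by
  rw [mem_Heaps] at hT
  obtain ⟨hsub, hle, hdisj⟩ := hT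
  ext q
  simp only [Finset.mem_filter, Finset.mem_singleton]
  constructor
  · rintro ⟨hq, hq2⟩
    by_contra hne
    have hd := hdisj q hq (i, n) hi hne
    have hqmem := hsub hq
    have himem := hsub hi
    simp only [Finset.mem_product, Finset.mem_Icc] at hqmem himem
    have : n ∈ Finset.Icc q.1 q.2 := by
      simp [Finset.mem_Icc]; omega
    have h2 : n ∈ Finset.Icc (i, n).1 (i, n).2 := by
      simp [Finset.mem_Icc]; omega
    exact (Finset.disjoint_left.mp hd this) h2
  · rintro rfl
    exact ⟨hi, rfl⟩

lemma phi_eq {n i : ℕ} {T : Finset (ℕ × ℕ)} (hT : T ∈ Heaps n)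
    (hi : (i, n) ∈ T) : phi n T = i := by
  rw [phi, filter_eq_singleton hT hi, Finset.sum_singleton]

lemma phi_mem {n i : ℕ} {T : Finset (ℕ × ℕ)} (hT : T ∈ Heaps n)
    (hi : 1 ≤ i) (h : phi n T = i) : (i, n) ∈ T := by
  rcases Finset.eq_empty_or_nonempty (T.filter (fun p => p.2 = n)) with he | ⟨q, hq⟩
  · rw [phi, he, Finset.sum_empty] at h; omega
  · simp only [Finset.mem_filter] at hq
    have hq' : (q.1, n) ∈ T := by
      have he : q = (q.1, n) := by rw [← hq.2]
      rw [← he]; exact hq.1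
    have h2 := phi_eq hT hq'
    rw [h] at h2
    rw [h2]; exact hq'

lemma phi_zero {n : ℕ} {T : Finset (ℕ × ℕ)} (hT : T ∈ Heaps n) :
    phi n T = 0 ↔ ∀ p ∈ T, p.2 ≠ n := by
  constructor
  · intro h p hp hpn
    have hp' : (p.1, n) ∈ T := by
      have : p = (p.1, n) := by rw [← hpn]
      rwa [← this]
    have := phi_eq hT hp'
    rw [h] at this
    have hsub := (mem_Heaps.mp hT).1
    have := hsub hp'
    simp only [Finset.mem_product, Finset.mem_Icc] at this
    omega
  · intro h
    rw [phi]
    have : T.filter (fun p => p.2 = n) = ∅ := by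
      rw [Finset.filter_eq_empty_iff]
      intro p hp
      exact h p hp
    rw [this, Finset.sum_empty]

lemma phi_le {n : ℕ} {T : Finset (ℕ × ℕ)} (hT : T ∈ Heaps n) : phi n T ≤ n := by
  by_cases h : ∀ p ∈ T, p.2 ≠ n
  · rw [(phi_zero hT).mpr h]; omega
  · push_neg at h
    obtain ⟨p, hp, hpn⟩ := h
    have hp' : (p.1, n) ∈ T := by
      have : p = (p.1, n) := by rw [← hpn]
      rwa [← this]
    rw [phi_eq hT hp']
    have hsub := (mem_Heaps.mp hT).1
    have := hsub hp'
    simp only [Finset.mem_product, Finset.mem_Icc] at this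
    omega

lemma fiber_zero (k : ℕ) :
    (Heaps (k+1)).filter (fun T => phi (k+1) T = 0) = Heaps k := by
  ext T
  simp only [Finset.mem_filter]
  constructor
  · rintro ⟨hT, h0⟩
    have h := (phi_zero hT).mp h0
    rw [mem_Heaps] at hT ⊢
    obtain ⟨hsub, hle, hdisj⟩ := hT
    refine ⟨?_, hle, hdisj⟩
    intro p hp
    have := hsub hp
    have h2 := h p hp
    have h3 := hle p hp
    simp only [Finset.mem_product, Finset.mem_Icc] at this ⊢
    omega
  · intro hT
    rw [mem_Heaps] at hT
    obtain ⟨hsub, hle, hdisj⟩ := hT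
    have hsub' : T ⊆ Finset.Icc 1 (k+1) ×ˢ Finset.Icc 1 (k+1) := by
      intro p hp
      have := hsub hp
      simp only [Finset.mem_product, Finset.mem_Icc] at this ⊢
      omega
    have hT' : T ∈ Heaps (k+1) := mem_Heaps.mpr ⟨hsub', hle, hdisj⟩
    refine ⟨hT', (phi_zero hT').mpr ?_⟩
    intro p hp
    have := hsub hp
    simp only [Finset.mem_product, Finset.mem_Icc] at this
    omega

lemma notMem_of_mem_Heaps {j k : ℕ} {T : Finset (ℕ × ℕ)} (hT : T ∈ Heaps j) :
    (j + 1, k + 1) ∉ T := by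
  intro h
  have := (mem_Heaps.mp hT).1 h
  simp only [Finset.mem_product, Finset.mem_Icc] at this
  omega

lemma fiber_succ (k j : ℕ) (hj : j ≤ k) :
    (Heaps (k+1)).filter (fun T => phi (k+1) T = j + 1)
      = (Heaps j).image (insert (j+1, k+1)) := by
  ext T
  simp only [Finset.mem_filter, Finset.mem_image]
  constructor
  · rintro ⟨hT, hphi⟩
    have hmem : (j+1, k+1) ∈ T := phi_mem hT (by omega) hphi
    refine ⟨T.erase (j+1, k+1), ?_, Finset.insert_erase hmem⟩
    rw [mem_Heaps] at hT
    obtain ⟨hsub, hle, hdisj⟩ := hT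
    rw [mem_Heaps]
    refine ⟨?_, fun p hp => hle p (Finset.mem_of_mem_erase hp),
      fun p hp q hq hpq => hdisj p (Finset.mem_of_mem_erase hp) q
        (Finset.mem_of_mem_erase hq) hpq⟩
    intro q hq
    have hqT := Finset.mem_of_mem_erase hq
    have hqne := Finset.ne_of_mem_erase hq
    have hd := hdisj q hqT (j+1, k+1) hmem hqne
    have hqb := hsub hqT
    simp only [Finset.mem_product, Finset.mem_Icc] at hqb
    have hq2 : q.2 ≤ j := by
      by_contra hc
      push_neg at hc
      have h1 : q.2 ∈ Finset.Icc q.1 q.2 := by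
        simp [Finset.mem_Icc]; exact hle q hqT
      have h2 : q.2 ∈ Finset.Icc (j+1, k+1).1 (j+1, k+1).2 := by
        simp [Finset.mem_Icc]; omega
      exact (Finset.disjoint_left.mp hd h1) h2
    have hq1 := hle q hqT
    simp only [Finset.mem_product, Finset.mem_Icc]
    omega
  · rintro ⟨T', hT', rfl⟩
    rw [mem_Heaps] at hT'
    obtain ⟨hsub, hle, hdisj⟩ := hT'
    have hbound : ∀ q ∈ T', 1 ≤ q.1 ∧ q.1 ≤ j ∧ 1 ≤ q.2 ∧ q.2 ≤ j := by
      intro q hq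
      have := hsub hq
      simp only [Finset.mem_product, Finset.mem_Icc] at this
      omega
    have hnew : ∀ q ∈ T', Disjoint (Finset.Icc q.1 q.2)
        (Finset.Icc (j+1, k+1).1 (j+1, k+1).2) := by
      intro q hq
      rw [Finset.disjoint_left]
      intro a ha ha'
      simp only [Finset.mem_Icc] at ha ha'
      have := hbound q hq
      omega
    have hT : insert (j+1, k+1) T' ∈ Heaps (k+1) := by
      rw [mem_Heaps]
      refine ⟨?_, ?_, ?_⟩
      · intro p hp
        rcases Finset.mem_insert.mp hp with rfl | hp'
        · simp only [Finset.mem_product, Finset.mem_Icc]; omega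
        · have := hbound p hp'
          simp only [Finset.mem_product, Finset.mem_Icc]
          omega
      · intro p hp
        rcases Finset.mem_insert.mp hp with rfl | hp'
        · omega
        · exact hle p hp'
      · intro p hp q hq hpq
        rcases Finset.mem_insert.mp hp with rfl | hp' <;>
          rcases Finset.mem_insert.mp hq with h' | hq'
        · exact absurd h'.symm hpq
        · exact (hnew q hq').symm
        · subst h'
          exact hnew p hp'
        · exact hdisj p hp' q hq' hpq
    refine ⟨hT, ?_⟩
    exact phi_eq hT (Finset.mem_insert_self _ _)

lemma recF (k : ℕ) :
    F (k + 1) = F k - Polynomial.X ^ 2 * ∑ j ∈ Finset.range (k + 1), F j := by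
  have hmaps : ∀ T ∈ Heaps (k+1), phi (k+1) T ∈ Finset.range (k+2) := by
    intro T hT
    simp only [Finset.mem_range]
    have := phi_le hT
    omega
  have hfib := Finset.sum_fiberwise_of_maps_to hmaps
    (fun T => (-1 : Polynomial ℤ) ^ T.card * Polynomial.X ^ (2 * T.card))
  rw [F, ← hfib, Finset.sum_range_succ']
  have h0 : ∑ T ∈ (Heaps (k+1)).filter (fun T => phi (k+1) T = 0),
      (-1 : Polynomial ℤ) ^ T.card * Polynomial.X ^ (2 * T.card) = F k := by
    rw [fiber_zero]; rfl
  rw [h0]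
  have hstep : ∀ j ∈ Finset.range (k+1),
      ∑ T ∈ (Heaps (k+1)).filter (fun T => phi (k+1) T = j + 1),
        (-1 : Polynomial ℤ) ^ T.card * Polynomial.X ^ (2 * T.card)
      = -(Polynomial.X ^ 2 * F j) := by
    intro j hj
    simp only [Finset.mem_range] at hj
    rw [fiber_succ k j (by omega)]
    rw [Finset.sum_image (fun x hx y hy hxy => by
      have hx' := notMem_of_mem_Heaps (k := k) hx
      have hy' := notMem_of_mem_Heaps (k := k) hy
      rw [← Finset.erase_insert hx', ← Finset.erase_insert hy', hxy])]
    rw [F, Finset.mul_sum, ← Finset.sum_neg_distrib]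
    apply Finset.sum_congr rfl
    intro T hT
    rw [Finset.card_insert_of_notMem (notMem_of_mem_Heaps hT)]
    ring
  rw [Finset.sum_congr rfl hstep]
  rw [Finset.sum_neg_distrib, ← Finset.mul_sum]
  ring

lemma sumG (k : ℕ) :
    Polynomial.X * ∑ j ∈ Finset.range (k + 1), G j = (-1) ^ k * U2I (2 * k + 1) := by
  induction k with
  | zero => simp [G, U2I]
  | succ n ih =>
    rw [Finset.sum_range_succ, mul_add, ih]
    have e1 : 2 * (n + 1) = 2 * n + 2 := by ring
    have e2 : 2 * (n + 1) + 1 = (2 * n + 1) + 2 := by ring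
    rw [G, e1]
    have e2' : 2 * n + 2 + 1 = 2 * n + 1 + 2 := by ring
    rw [e2', U2I_add_two]
    rw [U2I_add_two]
    have e3 : 2 * n + 1 + 1 = 2 * n + 2 := by ring
    rw [e3, U2I_add_two]
    have e4 : 2 * n + 1 = 2 * n + 1 := rfl
    ring

lemma recG (k : ℕ) :
    G (k + 1) = G k - Polynomial.X ^ 2 * ∑ j ∈ Finset.range (k + 1), G j := by
  have h := sumG k
  have h2 : Polynomial.X ^ 2 * ∑ j ∈ Finset.range (k + 1), G j
      = Polynomial.X * ((-1) ^ k * U2I (2 * k + 1)) := by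
    rw [← h]; ring
  rw [h2, G, G]
  have e1 : 2 * (k + 1) = 2 * k + 2 := by ring
  rw [e1, U2I_add_two]
  have e2 : 2 * k + 1 = 2 * k + 1 := rfl
  ring

lemma Heaps_zero : Heaps 0 = {∅} := by
  ext T
  simp only [Finset.mem_singleton, mem_Heaps]
  constructor
  · rintro ⟨hsub, -, -⟩
    rw [Finset.eq_empty_iff_forall_notMem]
    intro p hp
    have := hsub hp
    simp only [Finset.mem_product, Finset.mem_Icc] at this
    omega
  · rintro rfl
    simp

lemma FeqG : ∀ k, F k = G k := by
  intro k
  induction k using Nat.strong_induction_on with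
  | _ k ih =>
    match k with
    | 0 =>
      rw [G]
      simp only [F, Heaps_zero, Finset.sum_singleton, Finset.card_empty]
      simp [U2I]
    | k + 1 =>
      rw [recF, recG, ih k (by omega)]
      congr 1
      congr 1
      apply Finset.sum_congr rfl
      intro j hj
      simp only [Finset.mem_range] at hj
      exact ih j (by omega)

theorem statement7 (k : ℕ) :
    ∑ T ∈ ((Finset.Icc 1 k ×ˢ Finset.Icc 1 k).powerset).filter
        (fun T : Finset (ℕ × ℕ) =>
          (∀ p ∈ T, p.1 ≤ p.2) ∧
          (∀ p ∈ T, ∀ q ∈ T, p ≠ q →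
            Disjoint (Finset.Icc p.1 p.2) (Finset.Icc q.1 q.2))),
        (-1 : Polynomial ℤ) ^ T.card * Polynomial.X ^ (2 * T.card)
      = (-1) ^ k * U2I (2 * k) := by
  exact FeqG k
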